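/- arXiv:0906.2034 — 2 statements merged into one kernel-verified Lean document; each statement's English description precedes it below -/
import Mathlib

section
/- For a matrix W of rank r with singular value decomposition W = U D V' where D = diag(d_1,...,d_r), the unique minimizer of (1/2)‖Z − W‖_F² + λ‖Z‖_* over all matrices Z is given by the soft-thresholded SVD S_λ(W) = U D_λ V', where D_λ = diag((d_1−λ)_+, ..., (d_r−λ)_+). -/
open Matrix BigOperators Finset

noncomputable section

/-- Squared Frobenius norm of a real matrix. -/
def frobSq {m n : ℕ} (A : Matrix (Fin m) (Fin n) ℝ) : ℝ :=
  ∑ i, ∑ j, (A i j) ^ 2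

/-- Frobenius norm. -/
def frobNorm {m n : ℕ} (A : Matrix (Fin m) (Fin n) ℝ) : ℝ :=
  Real.sqrt (frobSq A)

/-- The singular values of `A`, as square roots of the eigenvalues of `Aᴴ * A`. -/
def singVals {m n : ℕ} (A : Matrix (Fin m) (Fin n) ℝ) : Fin n → ℝ :=
  fun i => Real.sqrt ((show (Aᵀ * A).IsHermitian by
    simpa [Matrix.conjTranspose_eq_transpose_of_trivial] using
      Matrix.isHermitian_conjTranspose_mul_self A).eigenvalues i)

/-- Nuclear norm: the sum of the singular values. -/
def nnorm {m n : ℕ} (A : Matrix (Fin m) (Fin n) ℝ) : ℝ :=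
  ∑ i, singVals A i

/-- Spectral norm: the largest singular value. -/
def specNorm {m n : ℕ} (A : Matrix (Fin m) (Fin n) ℝ) : ℝ :=
  ⨆ i, singVals A i

/-- Projection onto the observed entries `Ω`. -/
def pO {m n : ℕ} (Ω : Finset (Fin m × Fin n)) (Y : Matrix (Fin m) (Fin n) ℝ) :
    Matrix (Fin m) (Fin n) ℝ :=
  fun i j => if (i, j) ∈ Ω then Y i j else 0

/-- Complementary projection `P_Ω^⊥ = I - P_Ω`. -/
def pOc {m n : ℕ} (Ω : Finset (Fin m × Fin n)) (Y : Matrix (Fin m) (Fin n) ℝ) :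
    Matrix (Fin m) (Fin n) ℝ :=
  Y - pO Ω Y

/-- The objective `f_λ(Z) = ½‖P_Ω(Z) - P_Ω(X)‖_F² + λ‖Z‖_*`. -/
def fObj {m n : ℕ} (Ω : Finset (Fin m × Fin n)) (X : Matrix (Fin m) (Fin n) ℝ) (lam : ℝ)
    (Z : Matrix (Fin m) (Fin n) ℝ) : ℝ :=
  (1 / 2) * frobSq (pO Ω Z - pO Ω X) + lam * nnorm Z

/-- The surrogate `Q_λ(Z | Z̃) = ½‖P_Ω(X) + P_Ω^⊥(Z̃) - Z‖_F² + λ‖Z‖_*`. -/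
def qObj {m n : ℕ} (Ω : Finset (Fin m × Fin n)) (X : Matrix (Fin m) (Fin n) ℝ) (lam : ℝ)
    (Z Zt : Matrix (Fin m) (Fin n) ℝ) : ℝ :=
  (1 / 2) * frobSq (pO Ω X + pOc Ω Zt - Z) + lam * nnorm Z

/-- `IsSVD W U d V` : `W = U D Vᵀ` is a thin SVD of `W` with strictly positive
singular values `d` and orthonormal columns in `U` and `V`. -/
def IsSVD {m n r : ℕ} (W : Matrix (Fin m) (Fin n) ℝ) (U : Matrix (Fin m) (Fin r) ℝ)
    (d : Fin r → ℝ) (V : Matrix (Fin n) (Fin r) ℝ) : Prop :=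
  Uᵀ * U = 1 ∧ Vᵀ * V = 1 ∧ (∀ i, 0 < d i) ∧ W = U * Matrix.diagonal d * Vᵀ

/-- Trace inner product `⟨A, B⟩ = tr(AᵀB)`. -/
def minner {m n : ℕ} (A B : Matrix (Fin m) (Fin n) ℝ) : ℝ :=
  ∑ i, ∑ j, A i j * B i j

/-- `G` is a subgradient of the nuclear norm at `Z`. -/
def NucSubgrad {m n : ℕ} (Z G : Matrix (Fin m) (Fin n) ℝ) : Prop :=
  ∀ Y, nnorm Z + minner G (Y - Z) ≤ nnorm Y

end

lemma dotSelf_nonneg' {k : ℕ} (x : Fin k → ℝ) : 0 ≤ x ⬝ᵥ x :=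
  Finset.sum_nonneg fun _ _ => mul_self_nonneg _

lemma conjT_eq_T {a b : ℕ} (A : Matrix (Fin a) (Fin b) ℝ) : Aᴴ = Aᵀ := by
  ext i j; simp [Matrix.conjTranspose_apply]

lemma dot_mulVec_left' {a b : ℕ} (A : Matrix (Fin a) (Fin b) ℝ) (x : Fin b → ℝ)
    (y : Fin a → ℝ) : (A *ᵥ x) ⬝ᵥ y = x ⬝ᵥ (Aᵀ *ᵥ y) := by
  simp only [dotProduct, Matrix.mulVec, dotProduct, Matrix.transpose_apply,
    Finset.sum_mul, Finset.mul_sum]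
  rw [Finset.sum_comm]
  exact Finset.sum_congr rfl fun i _ => Finset.sum_congr rfl fun j _ => by ring

lemma dot_le_sqrts {k : ℕ} (x y : Fin k → ℝ) :
    x ⬝ᵥ y ≤ Real.sqrt (x ⬝ᵥ x) * Real.sqrt (y ⬝ᵥ y) := by
  have h := Real.sum_mul_le_sqrt_mul_sqrt Finset.univ x y
  simpa [dotProduct, sq] using h

-- eigenbasis dot products
lemma eig_dot {b : ℕ} (M : Matrix (Fin b) (Fin b) ℝ) (hM : M.IsHermitian) (i j : Fin b) :
    ⇑(hM.eigenvectorBasis i) ⬝ᵥ ⇑(hM.eigenvectorBasis j) = if i = j then 1 else 0 := by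
  have h := hM.eigenvectorBasis.orthonormal
  rw [orthonormal_iff_ite] at h
  have := h i j
  rw [PiLp.inner_apply] at this
  simpa [dotProduct, RCLike.inner_apply, mul_comm] using this

-- completeness: QQᵀ = 1
lemma eig_complete {b : ℕ} (M : Matrix (Fin b) (Fin b) ℝ) (hM : M.IsHermitian) (a c : Fin b) :
    ∑ i, (hM.eigenvectorBasis i) a * (hM.eigenvectorBasis i) c = if a = c then 1 else 0 := by
  classical
  set Q : Matrix (Fin b) (Fin b) ℝ := fun x i => hM.eigenvectorBasis i x with hQ
  have h1 : Qᵀ * Q = 1 := by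
    ext i j
    simp only [Matrix.mul_apply, Matrix.transpose_apply, Matrix.one_apply, hQ]
    have := eig_dot M hM i j
    exact this
  have h2 : Q * Qᵀ = 1 := mul_eq_one_comm.mp h1
  have := congrFun (congrFun h2 a) c
  simp only [Matrix.mul_apply, Matrix.transpose_apply, Matrix.one_apply, hQ] at this
  exact this

lemma sum_dotProduct' {k l : ℕ} (f : Fin k → Fin l → ℝ) (y : Fin l → ℝ) :
    (∑ i, f i) ⬝ᵥ y = ∑ i, f i ⬝ᵥ y := by
  simp only [dotProduct, Finset.sum_apply, Finset.sum_mul]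
  exact Finset.sum_comm

lemma dotProduct_sum' {k l : ℕ} (f : Fin k → Fin l → ℝ) (y : Fin l → ℝ) :
    y ⬝ᵥ (∑ i, f i) = ∑ i, y ⬝ᵥ f i := by
  simp only [dotProduct, Finset.sum_apply, Finset.mul_sum]
  exact Finset.sum_comm

lemma bessel' {k l : ℕ} (p : Fin k → Fin l → ℝ)
    (horth : ∀ i j, i ≠ j → p i ⬝ᵥ p j = 0) (hnorm : ∀ i, p i ⬝ᵥ p i ≤ 1)
    (x : Fin l → ℝ) : ∑ i, (p i ⬝ᵥ x) ^ 2 ≤ x ⬝ᵥ x := by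
  set c : Fin k → ℝ := fun i => p i ⬝ᵥ x with hc
  have key : 0 ≤ (x - ∑ i, c i • p i) ⬝ᵥ (x - ∑ i, c i • p i) := dotSelf_nonneg' _
  have hdouble : (∑ i, c i • p i) ⬝ᵥ (∑ i, c i • p i) = ∑ i, c i ^ 2 * (p i ⬝ᵥ p i) := by
    rw [sum_dotProduct']
    apply Finset.sum_congr rfl; intro i _
    rw [smul_dotProduct, dotProduct_sum']
    rw [smul_eq_mul, Finset.mul_sum]
    rw [Finset.sum_eq_single i]
    · rw [dotProduct_smul]; simp; ring
    · intro j _ hji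
      rw [dotProduct_smul, horth i j (Ne.symm hji)]; simp
    · simp
  have expand : (x - ∑ i, c i • p i) ⬝ᵥ (x - ∑ i, c i • p i)
      = x ⬝ᵥ x - 2 * ∑ i, c i ^ 2 + ∑ i, c i ^ 2 * (p i ⬝ᵥ p i) := by
    rw [sub_dotProduct, dotProduct_sub, dotProduct_sub,
      hdouble, dotProduct_sum', sum_dotProduct']
    simp only [dotProduct_smul, smul_dotProduct, smul_eq_mul]
    have h1 : ∀ i : Fin k, c i * (x ⬝ᵥ p i) = c i ^ 2 := by
      intro i
      rw [dotProduct_comm]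
      simp only [hc]; ring
    have h2 : ∀ i : Fin k, c i * (p i ⬝ᵥ x) = c i ^ 2 := by
      intro i; simp only [hc]; ring
    rw [Finset.sum_congr rfl fun i _ => h1 i, Finset.sum_congr rfl fun i _ => h2 i]
    ring
  have hle : ∑ i, c i ^ 2 * (p i ⬝ᵥ p i) ≤ ∑ i, c i ^ 2 := by
    apply Finset.sum_le_sum; intro i _
    calc c i ^ 2 * (p i ⬝ᵥ p i) ≤ c i ^ 2 * 1 :=
          mul_le_mul_of_nonneg_left (hnorm i) (sq_nonneg _)
      _ = c i ^ 2 := mul_one _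
  rw [expand] at key
  linarith

lemma sum_quad' {b : ℕ} (M : Matrix (Fin b) (Fin b) ℝ) (q : Fin b → Fin b → ℝ)
    (hq : ∀ a c, ∑ i, q i a * q i c = if a = c then 1 else 0) :
    ∑ i, q i ⬝ᵥ (M *ᵥ q i) = Matrix.trace M := by
  classical
  have h1 : ∀ i, q i ⬝ᵥ (M *ᵥ q i) = ∑ a, ∑ c, M a c * (q i a * q i c) := by
    intro i
    simp only [dotProduct, Matrix.mulVec, Finset.mul_sum]
    exact Finset.sum_congr rfl fun a _ => Finset.sum_congr rfl fun c _ => by ring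
  rw [Finset.sum_congr rfl fun i _ => h1 i]
  rw [Finset.sum_comm]
  have h2 : ∀ a : Fin b, (∑ i, ∑ c, M a c * (q i a * q i c)) = M a a := by
    intro a
    rw [Finset.sum_comm]
    have h3 : ∀ c : Fin b, (∑ i, M a c * (q i a * q i c)) = M a c * (if a = c then 1 else 0) := by
      intro c
      rw [← Finset.mul_sum, hq a c]
    rw [Finset.sum_congr rfl fun c _ => h3 c]
    simp
  rw [Finset.sum_congr rfl fun a _ => h2 a]
  rfl

section helpersY
open Matrix BigOperators Finset

lemma minner_eq_trace {a b : ℕ} (A B : Matrix (Fin a) (Fin b) ℝ) :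
    minner A B = Matrix.trace (Aᵀ * B) := by
  simp only [minner, Matrix.trace, Matrix.diag, Matrix.mul_apply, Matrix.transpose_apply]
  exact Finset.sum_comm

lemma minner_le_nnorm {mm nn : ℕ} (G Y : Matrix (Fin mm) (Fin nn) ℝ)
    (hG : ∀ x : Fin nn → ℝ, (G *ᵥ x) ⬝ᵥ (G *ᵥ x) ≤ x ⬝ᵥ x) :
    minner G Y ≤ nnorm Y := by
  classical
  have hY : (Yᵀ * Y).IsHermitian := by
    simpa [Matrix.conjTranspose_eq_transpose_of_trivial] using
      Matrix.isHermitian_conjTranspose_mul_self Y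
  set q : Fin nn → Fin nn → ℝ := fun i => ⇑(hY.eigenvectorBasis i) with hq
  set μ : Fin nn → ℝ := hY.eigenvalues with hμ
  have hmv : ∀ j, (Yᵀ * Y) *ᵥ q j = μ j • q j := by
    intro j
    rw [show Yᵀ = Yᴴ from (conjT_eq_T Y).symm]
    exact hY.mulVec_eigenvectorBasis j
  have hYq : ∀ i j, (Y *ᵥ q i) ⬝ᵥ (Y *ᵥ q j) = if i = j then μ j else 0 := by
    intro i j
    rw [dot_mulVec_left', Matrix.mulVec_mulVec, hmv j, dotProduct_smul,
      smul_eq_mul, eig_dot _ hY i j]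
    by_cases h : i = j <;> simp [h]
  have key : minner G Y = ∑ i, (G *ᵥ q i) ⬝ᵥ (Y *ᵥ q i) := by
    have h1 : ∀ i, (G *ᵥ q i) ⬝ᵥ (Y *ᵥ q i) = q i ⬝ᵥ ((Gᵀ * Y) *ᵥ q i) := by
      intro i; rw [dot_mulVec_left', Matrix.mulVec_mulVec]
    rw [Finset.sum_congr rfl fun i _ => h1 i,
      sum_quad' _ q (fun a c => eig_complete _ hY a c), minner_eq_trace]
  rw [key]
  have hnY : nnorm Y = ∑ i, Real.sqrt (μ i) := rfl
  rw [hnY]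
  apply Finset.sum_le_sum
  intro i _
  have b1 : Real.sqrt ((G *ᵥ q i) ⬝ᵥ (G *ᵥ q i)) ≤ 1 := by
    have h2 : (G *ᵥ q i) ⬝ᵥ (G *ᵥ q i) ≤ 1 := by
      have h3 := hG (q i)
      have hqq : q i ⬝ᵥ q i = 1 := by simpa using eig_dot _ hY i i
      linarith
    calc Real.sqrt ((G *ᵥ q i) ⬝ᵥ (G *ᵥ q i)) ≤ Real.sqrt 1 := Real.sqrt_le_sqrt h2
      _ = 1 := Real.sqrt_one
  have b2 : Real.sqrt ((Y *ᵥ q i) ⬝ᵥ (Y *ᵥ q i)) = Real.sqrt (μ i) := by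
    have h4 := hYq i i
    simp only [if_pos rfl, if_true] at h4
    rw [h4]
  calc (G *ᵥ q i) ⬝ᵥ (Y *ᵥ q i)
      ≤ Real.sqrt ((G *ᵥ q i) ⬝ᵥ (G *ᵥ q i)) * Real.sqrt ((Y *ᵥ q i) ⬝ᵥ (Y *ᵥ q i)) :=
        dot_le_sqrts _ _
    _ ≤ 1 * Real.sqrt (μ i) :=
        mul_le_mul b1 (le_of_eq b2) (Real.sqrt_nonneg _) (by norm_num)
    _ = Real.sqrt (μ i) := one_mul _

lemma nnorm_le_sum {mm nn rr : ℕ} (U : Matrix (Fin mm) (Fin rr) ℝ)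
    (s : Fin rr → ℝ) (V : Matrix (Fin nn) (Fin rr) ℝ)
    (hU : Uᵀ * U = 1) (hV : Vᵀ * V = 1) (hs : ∀ j, 0 ≤ s j) :
    nnorm (U * Matrix.diagonal s * Vᵀ) ≤ ∑ j, s j := by
  classical
  set Y : Matrix (Fin mm) (Fin nn) ℝ := U * Matrix.diagonal s * Vᵀ with hYdef
  have hY : (Yᵀ * Y).IsHermitian := by
    simpa [Matrix.conjTranspose_eq_transpose_of_trivial] using
      Matrix.isHermitian_conjTranspose_mul_self Y
  set q : Fin nn → Fin nn → ℝ := fun i => ⇑(hY.eigenvectorBasis i) with hq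
  set μ : Fin nn → ℝ := hY.eigenvalues with hμ
  have hmv : ∀ j, (Yᵀ * Y) *ᵥ q j = μ j • q j := by
    intro j
    rw [show Yᵀ = Yᴴ from (conjT_eq_T Y).symm]
    exact hY.mulVec_eigenvectorBasis j
  have hYq : ∀ i j, (Y *ᵥ q i) ⬝ᵥ (Y *ᵥ q j) = if i = j then μ j else 0 := by
    intro i j
    rw [dot_mulVec_left', Matrix.mulVec_mulVec, hmv j, dotProduct_smul,
      smul_eq_mul, eig_dot _ hY i j]
    by_cases h : i = j <;> simp [h]
  have hμnn : ∀ i, 0 ≤ μ i := by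
    intro i
    have h5 := hYq i i
    simp only [if_pos rfl, if_true] at h5
    rw [← h5]; exact dotSelf_nonneg' _
  set σ : Fin nn → ℝ := fun i => Real.sqrt (μ i) with hσ
  have hσsq : ∀ i, σ i * σ i = μ i := fun i => Real.mul_self_sqrt (hμnn i)
  set p : Fin nn → Fin mm → ℝ :=
    fun i => if σ i = 0 then 0 else (σ i)⁻¹ • (Y *ᵥ q i) with hp
  have hporth : ∀ i j, i ≠ j → p i ⬝ᵥ p j = 0 := by
    intro i j hij
    simp only [hp]
    by_cases h1 : σ i = 0
    · simp [h1]
    by_cases h2 : σ j = 0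
    · rw [if_neg h1, if_pos h2]; simp
    simp only [if_neg h1, if_neg h2, smul_dotProduct, dotProduct_smul,
      smul_eq_mul]
    rw [hYq i j, if_neg hij]
    ring
  have hpnorm : ∀ i, p i ⬝ᵥ p i ≤ 1 := by
    intro i
    simp only [hp]
    by_cases h1 : σ i = 0
    · simp [h1]
    simp only [if_neg h1, smul_dotProduct, dotProduct_smul, smul_eq_mul]
    rw [hYq i i, if_pos rfl, ← hσsq i]
    field_simp
    exact le_rfl
  have hpY : ∀ i, p i ⬝ᵥ (Y *ᵥ q i) = σ i := by
    intro i
    simp only [hp]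
    by_cases h1 : σ i = 0
    · simp [h1]
    simp only [if_neg h1, smul_dotProduct, smul_eq_mul]
    rw [hYq i i, if_pos rfl, ← hσsq i]
    field_simp
  have hnY : nnorm Y = ∑ i, σ i := rfl
  set uC : Fin rr → Fin mm → ℝ := fun j a => U a j with huC
  set vC : Fin rr → Fin nn → ℝ := fun j a => V a j with hvC
  have huu : ∀ j, uC j ⬝ᵥ uC j = 1 := by
    intro j
    have h6 := congrFun (congrFun hU j) j
    simpa [Matrix.mul_apply, dotProduct, Matrix.one_apply, huC,
      Matrix.transpose_apply] using h6
  have hvv : ∀ j, vC j ⬝ᵥ vC j = 1 := by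
    intro j
    have h7 := congrFun (congrFun hV j) j
    simpa [Matrix.mul_apply, dotProduct, Matrix.one_apply, hvC,
      Matrix.transpose_apply] using h7
  have hqorth : ∀ i j, i ≠ j → q i ⬝ᵥ q j = 0 := by
    intro i j hij
    have := eig_dot _ hY i j
    rwa [if_neg hij] at this
  have hqnorm : ∀ i, q i ⬝ᵥ q i ≤ 1 := by
    intro i
    have hqq := eig_dot _ hY i i
    simp only [if_pos rfl, if_true] at hqq
    exact le_of_eq hqq
  have hrep : ∀ i, σ i = ∑ j, (uC j ⬝ᵥ p i) * (s j * (vC j ⬝ᵥ q i)) := by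
    intro i
    rw [← hpY i]
    have e1 : Y *ᵥ q i = U *ᵥ (Matrix.diagonal s *ᵥ (Vᵀ *ᵥ q i)) := by
      rw [Matrix.mulVec_mulVec, Matrix.mulVec_mulVec, ← hYdef]
    rw [e1, dotProduct_comm, dot_mulVec_left']
    simp only [dotProduct, Matrix.mulVec_diagonal, Matrix.mulVec,
      Matrix.transpose_apply, huC, hvC, Matrix.diagonal_apply, ite_mul, zero_mul,
      Finset.sum_ite_eq, Finset.mem_univ, if_true]
    apply Finset.sum_congr rfl
    intro j _
    rw [Finset.mul_sum, Finset.sum_mul]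
    exact Finset.sum_congr rfl fun x _ => by ring
  calc nnorm Y = ∑ i, σ i := hnY
    _ = ∑ i, ∑ j, (uC j ⬝ᵥ p i) * (s j * (vC j ⬝ᵥ q i)) :=
        Finset.sum_congr rfl fun i _ => hrep i
    _ = ∑ j, ∑ i, (uC j ⬝ᵥ p i) * (s j * (vC j ⬝ᵥ q i)) := Finset.sum_comm
    _ = ∑ j, s j * ∑ i, (uC j ⬝ᵥ p i) * (vC j ⬝ᵥ q i) := by
        apply Finset.sum_congr rfl
        intro j _
        rw [Finset.mul_sum]
        exact Finset.sum_congr rfl fun i _ => by ring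
    _ ≤ ∑ j, s j * 1 := by
        apply Finset.sum_le_sum
        intro j _
        apply mul_le_mul_of_nonneg_left _ (hs j)
        have cs := Real.sum_mul_le_sqrt_mul_sqrt Finset.univ
          (fun i => uC j ⬝ᵥ p i) (fun i => vC j ⬝ᵥ q i)
        have bU : ∑ i, (uC j ⬝ᵥ p i) ^ 2 ≤ 1 := by
          have hb := bessel' p hporth hpnorm (uC j)
          rw [huu j] at hb
          calc ∑ i, (uC j ⬝ᵥ p i) ^ 2 = ∑ i, (p i ⬝ᵥ uC j) ^ 2 :=
              Finset.sum_congr rfl fun i _ => by rw [dotProduct_comm]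
            _ ≤ 1 := hb
        have bV : ∑ i, (vC j ⬝ᵥ q i) ^ 2 ≤ 1 := by
          have hb := bessel' q hqorth hqnorm (vC j)
          rw [hvv j] at hb
          calc ∑ i, (vC j ⬝ᵥ q i) ^ 2 = ∑ i, (q i ⬝ᵥ vC j) ^ 2 :=
              Finset.sum_congr rfl fun i _ => by rw [dotProduct_comm]
            _ ≤ 1 := hb
        have sq1 : Real.sqrt (∑ i, (uC j ⬝ᵥ p i) ^ 2) ≤ 1 := by
          calc Real.sqrt (∑ i, (uC j ⬝ᵥ p i) ^ 2) ≤ Real.sqrt 1 := Real.sqrt_le_sqrt bU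
            _ = 1 := Real.sqrt_one
        have sq2 : Real.sqrt (∑ i, (vC j ⬝ᵥ q i) ^ 2) ≤ 1 := by
          calc Real.sqrt (∑ i, (vC j ⬝ᵥ q i) ^ 2) ≤ Real.sqrt 1 := Real.sqrt_le_sqrt bV
            _ = 1 := Real.sqrt_one
        calc ∑ i, (uC j ⬝ᵥ p i) * (vC j ⬝ᵥ q i)
            ≤ Real.sqrt (∑ i, (uC j ⬝ᵥ p i) ^ 2) * Real.sqrt (∑ i, (vC j ⬝ᵥ q i) ^ 2) := cs
          _ ≤ 1 * 1 := mul_le_mul sq1 sq2 (Real.sqrt_nonneg _) (by norm_num)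
          _ = 1 := by norm_num
    _ = ∑ j, s j := by simp

lemma opbound' {mm nn rr : ℕ} (U : Matrix (Fin mm) (Fin rr) ℝ)
    (c : Fin rr → ℝ) (V : Matrix (Fin nn) (Fin rr) ℝ)
    (hU : Uᵀ * U = 1) (hV : Vᵀ * V = 1) (hc : ∀ j, c j ^ 2 ≤ 1) :
    ∀ x : Fin nn → ℝ, ((U * Matrix.diagonal c * Vᵀ) *ᵥ x) ⬝ᵥ
      ((U * Matrix.diagonal c * Vᵀ) *ᵥ x) ≤ x ⬝ᵥ x := by
  classical
  intro x
  set z : Fin rr → ℝ := Vᵀ *ᵥ x with hz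
  set w : Fin rr → ℝ := Matrix.diagonal c *ᵥ z with hw
  have e1 : (U * Matrix.diagonal c * Vᵀ) *ᵥ x = U *ᵥ w := by
    rw [hw, hz, Matrix.mulVec_mulVec, Matrix.mulVec_mulVec]
  rw [e1]
  have e2 : (U *ᵥ w) ⬝ᵥ (U *ᵥ w) = w ⬝ᵥ w := by
    rw [dot_mulVec_left', Matrix.mulVec_mulVec, hU, Matrix.one_mulVec]
  rw [e2]
  set vC : Fin rr → Fin nn → ℝ := fun j a => V a j with hvC
  have hvorth : ∀ i j, i ≠ j → vC i ⬝ᵥ vC j = 0 := by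
    intro i j hij
    have h8 := congrFun (congrFun hV i) j
    simpa [Matrix.mul_apply, dotProduct, Matrix.one_apply, hvC,
      Matrix.transpose_apply, hij] using h8
  have hvnorm : ∀ j, vC j ⬝ᵥ vC j ≤ 1 := by
    intro j
    have h9 := congrFun (congrFun hV j) j
    have : vC j ⬝ᵥ vC j = 1 := by
      simpa [Matrix.mul_apply, dotProduct, Matrix.one_apply, hvC,
        Matrix.transpose_apply] using h9
    exact le_of_eq this
  have e3 : w ⬝ᵥ w ≤ ∑ j, (z j) ^ 2 := by
    have : w ⬝ᵥ w = ∑ j, c j ^ 2 * z j ^ 2 := by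
      simp only [dotProduct, hw, Matrix.mulVec_diagonal]
      exact Finset.sum_congr rfl fun j _ => by ring
    rw [this]
    apply Finset.sum_le_sum
    intro j _
    calc c j ^ 2 * z j ^ 2 ≤ 1 * z j ^ 2 :=
        mul_le_mul_of_nonneg_right (hc j) (sq_nonneg _)
      _ = z j ^ 2 := one_mul _
  have e4 : ∑ j, (z j) ^ 2 = ∑ j, (vC j ⬝ᵥ x) ^ 2 := by
    apply Finset.sum_congr rfl
    intro j _
    simp only [hz, Matrix.mulVec, Matrix.transpose_apply, dotProduct, hvC]
  have e5 := bessel' vC hvorth hvnorm x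
  rw [e4] at e3
  linarith

lemma frobSq_nonneg' {a b : ℕ} (A : Matrix (Fin a) (Fin b) ℝ) : 0 ≤ frobSq A :=
  Finset.sum_nonneg fun _ _ => Finset.sum_nonneg fun _ _ => sq_nonneg _

lemma frobSq_pos' {a b : ℕ} (A : Matrix (Fin a) (Fin b) ℝ) (hA : A ≠ 0) : 0 < frobSq A := by
  rcases lt_or_eq_of_le (frobSq_nonneg' A) with h | h
  · exact h
  exfalso
  apply hA
  ext i j
  have h0 : ∀ i ∈ Finset.univ, (0:ℝ) ≤ ∑ j, (A i j)^2 :=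
    fun i _ => Finset.sum_nonneg fun _ _ => sq_nonneg _
  have h1 := (Finset.sum_eq_zero_iff_of_nonneg h0).mp h.symm i (Finset.mem_univ i)
  have h2 := (Finset.sum_eq_zero_iff_of_nonneg
    (fun j _ => sq_nonneg (A i j))).mp h1 j (Finset.mem_univ j)
  have := sq_eq_zero_iff.mp h2
  simpa using this

lemma frobSq_add' {a b : ℕ} (A B : Matrix (Fin a) (Fin b) ℝ) :
    frobSq (A + B) = frobSq A + 2 * minner A B + frobSq B := by
  simp only [frobSq, minner, Matrix.add_apply, Finset.mul_sum, ← Finset.sum_add_distrib]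
  exact Finset.sum_congr rfl fun i _ => Finset.sum_congr rfl fun j _ => by ring

end helpersY
/-- soft-thresholded SVD is the unique minimizer of
`½‖Z - W‖_F² + λ‖Z‖_*`. -/
theorem soft_threshold_unique_minimizer {m n r : ℕ}
    (W : Matrix (Fin m) (Fin n) ℝ) (U : Matrix (Fin m) (Fin r) ℝ)
    (d : Fin r → ℝ) (V : Matrix (Fin n) (Fin r) ℝ)
    (lam : ℝ) (hlam : 0 ≤ lam) (hSVD : IsSVD W U d V) :
    ∀ Z : Matrix (Fin m) (Fin n) ℝ,
      Z ≠ U * Matrix.diagonal (fun i => max (d i - lam) 0) * Vᵀ →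
      (1 / 2) * frobSq (U * Matrix.diagonal (fun i => max (d i - lam) 0) * Vᵀ - W) +
          lam * nnorm (U * Matrix.diagonal (fun i => max (d i - lam) 0) * Vᵀ) <
        (1 / 2) * frobSq (Z - W) + lam * nnorm Z := by
  obtain ⟨hU, hV, hd, hW⟩ := hSVD
  intro Z hZ
  set s : Fin r → ℝ := fun i => max (d i - lam) 0 with hs
  set Zh : Matrix (Fin m) (Fin n) ℝ := U * Matrix.diagonal s * Vᵀ with hZh
  have hsnn : ∀ i, 0 ≤ s i := fun i => le_max_right _ _
  rcases eq_or_lt_of_le hlam with h0 | hpos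
  · -- lam = 0
    have hlam0 : lam = 0 := h0.symm
    have hsd : s = d := by
      funext i
      simp [hs, hlam0, max_eq_left (hd i).le]
    have hZhW : Zh = W := by rw [hZh, hsd, ← hW]
    rw [hlam0, hZhW, sub_self]
    have h00 : frobSq (0 : Matrix (Fin m) (Fin n) ℝ) = 0 := by simp [frobSq]
    rw [h00]
    have hne : Z - W ≠ 0 := by
      intro h
      exact hZ (by rw [hZhW]; exact sub_eq_zero.mp h)
    have := frobSq_pos' _ hne
    simp only [zero_mul, add_zero, mul_zero]
    linarith
  · -- lam > 0
    set c : Fin r → ℝ := fun i => (d i - s i) / lam with hc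
    have hlamne : lam ≠ 0 := ne_of_gt hpos
    have hds : ∀ i, d i - s i = lam * c i := by
      intro i; simp only [hc]; field_simp
    have hsld : ∀ i, s i ≤ d i := fun i =>
      max_le (sub_le_self _ hlam) (hd i).le
    have hc0 : ∀ i, 0 ≤ c i := fun i =>
      div_nonneg (by linarith [hsld i]) hlam
    have hc1 : ∀ i, c i ≤ 1 := by
      intro i
      rw [hc]
      apply div_le_one_of_le₀ _ hlam
      have := le_max_left (d i - lam) 0
      linarith [this]
    set G : Matrix (Fin m) (Fin n) ℝ := U * Matrix.diagonal c * Vᵀ with hG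
    have hdd : Matrix.diagonal d - Matrix.diagonal s = lam • Matrix.diagonal c := by
      ext i j
      by_cases h : i = j
      · subst h
        simp [Matrix.diagonal_apply_eq, hds i]
      · simp [Matrix.diagonal_apply_ne _ h]
    have hWZh : W - Zh = lam • G := by
      rw [hW, hZh, hG]
      calc U * Matrix.diagonal d * Vᵀ - U * Matrix.diagonal s * Vᵀ
          = (U * Matrix.diagonal d - U * Matrix.diagonal s) * Vᵀ := by
            rw [Matrix.sub_mul]
        _ = (U * (Matrix.diagonal d - Matrix.diagonal s)) * Vᵀ := by
            rw [Matrix.mul_sub]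
        _ = (U * (lam • Matrix.diagonal c)) * Vᵀ := by rw [hdd]
        _ = lam • (U * Matrix.diagonal c * Vᵀ) := by
            rw [Matrix.mul_smul, Matrix.smul_mul]
    have hopb : ∀ x : Fin n → ℝ, ((U * Matrix.diagonal c * Vᵀ) *ᵥ x) ⬝ᵥ
        ((U * Matrix.diagonal c * Vᵀ) *ᵥ x) ≤ x ⬝ᵥ x :=
      opbound' U c V hU hV (fun j => by nlinarith [hc0 j, hc1 j])
    have hGle : ∀ X : Matrix (Fin m) (Fin n) ℝ, minner G X ≤ nnorm X := by
      intro X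
      rw [hG]
      exact minner_le_nnorm _ X hopb
    have hGZh : minner G Zh = ∑ j, s j := by
      rw [minner_eq_trace, hG, hZh]
      have ht : (U * Matrix.diagonal c * Vᵀ)ᵀ = V * Matrix.diagonal c * Uᵀ := by
        rw [Matrix.transpose_mul, Matrix.transpose_mul, Matrix.transpose_transpose,
          Matrix.diagonal_transpose, Matrix.mul_assoc]
      rw [ht]
      have hmid : V * Matrix.diagonal c * Uᵀ * (U * Matrix.diagonal s * Vᵀ)
          = V * Matrix.diagonal (fun j => c j * s j) * Vᵀ := by
        rw [Matrix.mul_assoc (V * Matrix.diagonal c) Uᵀ (U * Matrix.diagonal s * Vᵀ)]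
        rw [show Uᵀ * (U * Matrix.diagonal s * Vᵀ) = Matrix.diagonal s * Vᵀ by
          rw [Matrix.mul_assoc U (Matrix.diagonal s) Vᵀ, ← Matrix.mul_assoc Uᵀ U _, hU,
            Matrix.one_mul]]
        rw [Matrix.mul_assoc V (Matrix.diagonal c) _, ← Matrix.mul_assoc (Matrix.diagonal c) _ _,
          Matrix.diagonal_mul_diagonal, ← Matrix.mul_assoc V _ _]
      rw [hmid, Matrix.trace_mul_comm, ← Matrix.mul_assoc, hV, Matrix.one_mul,
        Matrix.trace_diagonal]
      apply Finset.sum_congr rfl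
      intro j _
      by_cases hcase : d j - lam ≤ 0
      · have hsj : s j = 0 := max_eq_right hcase
        rw [hsj, mul_zero]
      · have hsj : s j = d j - lam := max_eq_left (by linarith)
        have hcj : c j = 1 := by
          simp only [hc]
          rw [hsj]
          field_simp
          ring
        rw [hcj, one_mul]
    have hnZh : nnorm Zh ≤ ∑ j, s j := by
      rw [hZh]; exact nnorm_le_sum U s V hU hV hsnn
    have hquad : frobSq (Z - W) = frobSq (Zh - W) + 2 * minner (Zh - W) (Z - Zh)
        + frobSq (Z - Zh) := by
      have hsplit : Z - W = (Zh - W) + (Z - Zh) := by abel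
      rw [hsplit, frobSq_add']
    have hmin1 : minner (Zh - W) (Z - Zh) = lam * minner G Zh - lam * minner G Z := by
      have hZhW' : Zh - W = -(lam • G) := by rw [← hWZh, neg_sub]
      rw [hZhW']
      simp only [minner, Matrix.neg_apply, Matrix.smul_apply, Matrix.sub_apply, smul_eq_mul]
      rw [Finset.mul_sum, Finset.mul_sum, ← Finset.sum_sub_distrib]
      apply Finset.sum_congr rfl; intro i _
      rw [Finset.mul_sum, Finset.mul_sum, ← Finset.sum_sub_distrib]
      apply Finset.sum_congr rfl; intro j _
      ring
    have hfq : 0 < frobSq (Z - Zh) := frobSq_pos' _ (sub_ne_zero.mpr hZ)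
    have i1 : lam * minner G Z ≤ lam * nnorm Z :=
      mul_le_mul_of_nonneg_left (hGle Z) hlam
    have i2 : lam * nnorm Zh ≤ lam * ∑ j, s j :=
      mul_le_mul_of_nonneg_left hnZh hlam
    have hGZh' : lam * minner G Zh = lam * ∑ j, s j := by rw [hGZh]
    linarith [hquad, hmin1, hfq, i1, i2, hGZh']
end

section
/- The subdifferential of the nuclear norm: for a matrix Z with (thin) SVD Z = U D V' where D has strictly positive diagonal, every matrix of the form UV' + W with U'W = 0, WV = 0 and spectral norm ‖W‖₂ ≤ 1 is a subgradient of ‖·‖_* at Z, i.e., for all Y, ‖Y‖_* ≥ ‖Z‖_* + ⟨UV' + W, Y − Z⟩ where ⟨A,B⟩ = tr(A'B). -/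
open Matrix BigOperators Finset

noncomputable section
namespace NNSub

open Matrix

lemma posSemidef_tmul {m n : ℕ} (A : Matrix (Fin m) (Fin n) ℝ) :
    (Aᵀ * A).PosSemidef := by
  have := Matrix.posSemidef_conjTranspose_mul_self A
  rwa [conjTranspose_eq_transpose_of_trivial] at this

lemma col_sq_entry {m n : ℕ} (C D : Matrix (Fin m) (Fin n) ℝ) (i : Fin n) :
    (Cᵀ * D) i i = ∑ k, C k i * D k i := by
  simp [mul_apply]

lemma quad_entry {n : ℕ} (Q M : Matrix (Fin n) (Fin n) ℝ) (i : Fin n) :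
    (Qᵀ * M * Q) i i = (fun k => Q k i) ⬝ᵥ (M *ᵥ (fun k => Q k i)) := by
  simp only [mul_apply, mulVec, dotProduct, transpose_apply, Finset.sum_mul, Finset.mul_sum,
    mul_assoc]
  exact Finset.sum_comm

lemma minner_eq_trace {m n : ℕ} (A B : Matrix (Fin m) (Fin n) ℝ) :
    minner A B = Matrix.trace (Aᵀ * B) := by
  simp only [minner, Matrix.trace, Matrix.diag, mul_apply, transpose_apply]
  exact Finset.sum_comm

lemma dot_transpose {m n : ℕ} (M : Matrix (Fin m) (Fin n) ℝ) (x : Fin m → ℝ) (z : Fin n → ℝ) :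
    (Mᵀ *ᵥ x) ⬝ᵥ z = x ⬝ᵥ (M *ᵥ z) := by
  rw [Matrix.mulVec_transpose, ← Matrix.dotProduct_mulVec]

lemma dot_transpose' {m n : ℕ} (M : Matrix (Fin m) (Fin n) ℝ) (x : Fin n → ℝ) (z : Fin m → ℝ) :
    x ⬝ᵥ (Mᵀ *ᵥ z) = (M *ᵥ x) ⬝ᵥ z := by
  conv_rhs => rw [← Matrix.transpose_transpose M]
  exact (dot_transpose Mᵀ x z).symm

lemma real_spectral {n : ℕ} (B : Matrix (Fin n) (Fin n) ℝ) (hH : B.IsHermitian) :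
    B = (hH.eigenvectorUnitary : Matrix (Fin n) (Fin n) ℝ) * diagonal hH.eigenvalues *
      (hH.eigenvectorUnitary : Matrix (Fin n) (Fin n) ℝ)ᵀ := by
  have := hH.spectral_theorem
  rw [Unitary.conjStarAlgAut_apply, Matrix.star_eq_conjTranspose,
    conjTranspose_eq_transpose_of_trivial] at this
  simpa using this

lemma rayleigh_le {n : ℕ} (B : Matrix (Fin n) (Fin n) ℝ) (hH : B.IsHermitian) (c : ℝ)
    (hc : ∀ i, hH.eigenvalues i ≤ c) (x : Fin n → ℝ) :
    x ⬝ᵥ (B *ᵥ x) ≤ c * (x ⬝ᵥ x) := by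
  set Q : Matrix (Fin n) (Fin n) ℝ := (hH.eigenvectorUnitary : Matrix (Fin n) (Fin n) ℝ)
    with hQdef
  have hQmem := hH.eigenvectorUnitary.2
  have hQ2 : Q * Qᵀ = 1 := by
    have := Matrix.mem_unitaryGroup_iff.mp hQmem
    rwa [Matrix.star_eq_conjTranspose, conjTranspose_eq_transpose_of_trivial] at this
  set y : Fin n → ℝ := Qᵀ *ᵥ x with hy
  have h1 : x ⬝ᵥ (B *ᵥ x) = y ⬝ᵥ (diagonal hH.eigenvalues *ᵥ y) := by
    conv_lhs => rw [real_spectral B hH, ← hQdef]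
    rw [← Matrix.mulVec_mulVec, ← Matrix.mulVec_mulVec, ← dot_transpose]
  have h2 : y ⬝ᵥ y = x ⬝ᵥ x := by
    rw [hy, dot_transpose, Matrix.mulVec_mulVec, hQ2, Matrix.one_mulVec]
  have h3 : y ⬝ᵥ (diagonal hH.eigenvalues *ᵥ y) = ∑ i, hH.eigenvalues i * (y i * y i) := by
    simp [dotProduct, Matrix.mulVec_diagonal]
    exact Finset.sum_congr rfl fun i _ => by ring
  rw [h1, h3, ← h2]
  have : c * (y ⬝ᵥ y) = ∑ i, c * (y i * y i) := by
    simp [dotProduct, Finset.mul_sum]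
  rw [this]
  exact Finset.sum_le_sum fun i _ => mul_le_mul_of_nonneg_right (hc i) (mul_self_nonneg _)

lemma minner_le_nnorm {m n : ℕ} (G A : Matrix (Fin m) (Fin n) ℝ)
    (hG : ∀ v : Fin n → ℝ, v ⬝ᵥ ((Gᵀ * G) *ᵥ v) ≤ v ⬝ᵥ v) :
    minner G A ≤ nnorm A := by
  have hB := posSemidef_tmul A
  have hH : (Aᵀ * A).IsHermitian := hB.1
  set Q : Matrix (Fin n) (Fin n) ℝ := (hH.eigenvectorUnitary : Matrix (Fin n) (Fin n) ℝ)
    with hQdef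
  have hQmem := hH.eigenvectorUnitary.2
  have hQ1 : Qᵀ * Q = 1 := by
    have := Matrix.mem_unitaryGroup_iff'.mp hQmem
    rwa [Matrix.star_eq_conjTranspose, conjTranspose_eq_transpose_of_trivial] at this
  have hQ2 : Q * Qᵀ = 1 := by
    have := Matrix.mem_unitaryGroup_iff.mp hQmem
    rwa [Matrix.star_eq_conjTranspose, conjTranspose_eq_transpose_of_trivial] at this
  have hdiag : Qᵀ * (Aᵀ * A) * Q = diagonal hH.eigenvalues := by
    have hs := real_spectral (Aᵀ * A) hH
    rw [← hQdef] at hs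
    calc Qᵀ * (Aᵀ * A) * Q = Qᵀ * (Q * diagonal hH.eigenvalues * Qᵀ) * Q := by rw [← hs]
      _ = diagonal hH.eigenvalues := by
        simp only [Matrix.mul_assoc]
        rw [← Matrix.mul_assoc Qᵀ Q, hQ1, Matrix.one_mul, Matrix.mul_one]
  have hmin : minner G A = Matrix.trace ((G * Q)ᵀ * (A * Q)) := by
    have he : (G * Q)ᵀ * (A * Q) = Qᵀ * (Gᵀ * A * Q) := by
      simp only [Matrix.transpose_mul, Matrix.mul_assoc]
    rw [minner_eq_trace, he, Matrix.trace_mul_comm Qᵀ, Matrix.mul_assoc (Gᵀ * A) Q Qᵀ,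
      hQ2, Matrix.mul_one]
  rw [hmin, Matrix.trace]
  have hnn : nnorm A = ∑ i, Real.sqrt (hH.eigenvalues i) := rfl
  rw [hnn]
  apply Finset.sum_le_sum
  intro i _
  have hentry : ((G * Q)ᵀ * (A * Q)).diag i = ∑ k, (G * Q) k i * (A * Q) k i := by
    rw [Matrix.diag_apply]; exact col_sq_entry _ _ i
  rw [hentry]
  have hCS := Real.sum_mul_le_sqrt_mul_sqrt Finset.univ (fun k => (G * Q) k i)
    (fun k => (A * Q) k i)
  refine hCS.trans ?_
  have hc : ∑ k, (G * Q) k i ^ 2 ≤ 1 := by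
    have h1 : ∑ k, (G * Q) k i ^ 2 = ((G * Q)ᵀ * (G * Q)) i i := by
      rw [col_sq_entry]; simp [pow_two]
    have h2 : ((G * Q)ᵀ * (G * Q)) = Qᵀ * (Gᵀ * G) * Q := by
      rw [Matrix.transpose_mul]
      rw [Matrix.mul_assoc, Matrix.mul_assoc, Matrix.mul_assoc]
    have h3 : (Qᵀ * (Gᵀ * G) * Q) i i ≤ (Qᵀ * Q) i i := by
      have := hG (fun k => Q k i)
      rw [quad_entry]
      calc (fun k => Q k i) ⬝ᵥ ((Gᵀ * G) *ᵥ fun k => Q k i)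
          ≤ (fun k => Q k i) ⬝ᵥ (fun k => Q k i) := this
        _ = (Qᵀ * Q) i i := by rw [col_sq_entry]; simp [dotProduct]
    have h4 : (Qᵀ * Q) i i = 1 := by rw [hQ1]; simp
    rw [h1, h2]; rw [h4] at h3; exact h3
  have hd : ∑ k, (A * Q) k i ^ 2 = hH.eigenvalues i := by
    have h1 : ∑ k, (A * Q) k i ^ 2 = ((A * Q)ᵀ * (A * Q)) i i := by
      rw [col_sq_entry]; simp [pow_two]
    have h2 : ((A * Q)ᵀ * (A * Q)) = Qᵀ * (Aᵀ * A) * Q := by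
      rw [Matrix.transpose_mul, Matrix.mul_assoc, Matrix.mul_assoc, Matrix.mul_assoc]
    rw [h1, h2, hdiag]; simp
  rw [hd]
  have hsq1 := Real.sqrt_le_sqrt hc
  rw [Real.sqrt_one] at hsq1
  nlinarith [Real.sqrt_nonneg (hH.eigenvalues i), Real.sqrt_nonneg (∑ k, (G * Q) k i ^ 2)]

section
open scoped MatrixOrder

def _root_.Matrix.PosSemidef.sqrt {n : ℕ} {A : Matrix (Fin n) (Fin n) ℝ} (_hA : A.PosSemidef) :
    Matrix (Fin n) (Fin n) ℝ := CFC.sqrt A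

lemma _root_.Matrix.PosSemidef.eq_sqrt_of_sq_eq {n : ℕ} {A B : Matrix (Fin n) (Fin n) ℝ}
    (hB : B.PosSemidef) (hA : A.PosSemidef) (h : B ^ 2 = A) : B = hA.sqrt :=
  (CFC.sqrt_unique (by rw [← sq]; exact h) hB.nonneg).symm

lemma trace_psd_sqrt {n : ℕ} {A : Matrix (Fin n) (Fin n) ℝ} (hA : A.PosSemidef) :
    hA.sqrt.trace = ∑ i, Real.sqrt (hA.1.eigenvalues i) := by
  rw [Matrix.PosSemidef.sqrt, CFC.sqrt_eq_cfc, cfc_nnreal_eq_real _ A hA.nonneg, hA.1.cfc_eq]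
  simp only [IsHermitian.cfc, Unitary.conjStarAlgAut_apply]
  rw [Matrix.trace_mul_cycle, Unitary.coe_star_mul_self, Matrix.one_mul, Matrix.trace_diagonal]
  refine Finset.sum_congr rfl fun i _ => ?_
  simp [hA.eigenvalues_nonneg i]

end

lemma nnorm_svd {m n r : ℕ} (Z : Matrix (Fin m) (Fin n) ℝ) (U : Matrix (Fin m) (Fin r) ℝ)
    (d : Fin r → ℝ) (V : Matrix (Fin n) (Fin r) ℝ)
    (hU : Uᵀ * U = 1) (hV : Vᵀ * V = 1) (hd : ∀ i, 0 < d i)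
    (hZ : Z = U * Matrix.diagonal d * Vᵀ) :
    nnorm Z = ∑ i, d i := by
  have hB := posSemidef_tmul Z
  have hZtZ : Zᵀ * Z = V * (diagonal fun i => d i * d i) * Vᵀ := by
    rw [hZ]
    simp only [Matrix.transpose_mul, Matrix.transpose_transpose, Matrix.diagonal_transpose,
      Matrix.mul_assoc]
    rw [← Matrix.mul_assoc Uᵀ U, hU, Matrix.one_mul, ← Matrix.mul_assoc (diagonal d),
      Matrix.diagonal_mul_diagonal]
  have hSpsd : (V * diagonal d * Vᵀ).PosSemidef := by
    have := Matrix.PosSemidef.mul_mul_conjTranspose_same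
      (Matrix.posSemidef_diagonal_iff.mpr fun i => (hd i).le) V
    rwa [conjTranspose_eq_transpose_of_trivial] at this
  have hsq : (V * diagonal d * Vᵀ) ^ 2 = Zᵀ * Z := by
    rw [pow_two, hZtZ]
    simp only [Matrix.mul_assoc]
    rw [← Matrix.mul_assoc Vᵀ V, hV, Matrix.one_mul, ← Matrix.mul_assoc (diagonal d),
      Matrix.diagonal_mul_diagonal]
  have hS : V * diagonal d * Vᵀ = hB.sqrt := hSpsd.eq_sqrt_of_sq_eq hB hsq
  have h1 : nnorm Z = hB.sqrt.trace := by rw [trace_psd_sqrt]; rfl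
  rw [h1, ← hS, Matrix.trace_mul_cycle, hV, Matrix.one_mul, Matrix.trace_diagonal]

lemma minner_G_svd {m n r : ℕ} (U : Matrix (Fin m) (Fin r) ℝ) (d : Fin r → ℝ)
    (V : Matrix (Fin n) (Fin r) ℝ) (W : Matrix (Fin m) (Fin n) ℝ)
    (hU : Uᵀ * U = 1) (hV : Vᵀ * V = 1) (hUW : Uᵀ * W = 0) :
    minner (U * Vᵀ + W) (U * diagonal d * Vᵀ) = ∑ i, d i := by
  have hWU : Wᵀ * U = 0 := by
    have := congrArg Matrix.transpose hUW
    simpa [Matrix.transpose_mul] using this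
  rw [minner_eq_trace, Matrix.transpose_add, Matrix.transpose_mul, Matrix.transpose_transpose,
    Matrix.add_mul, Matrix.trace_add]
  have t2 : Wᵀ * (U * diagonal d * Vᵀ) = 0 := by
    rw [← Matrix.mul_assoc, ← Matrix.mul_assoc, hWU, Matrix.zero_mul, Matrix.zero_mul]
  have t1 : V * Uᵀ * (U * diagonal d * Vᵀ) = V * diagonal d * Vᵀ := by
    simp only [Matrix.mul_assoc]
    rw [← Matrix.mul_assoc Uᵀ U, hU, Matrix.one_mul]
  rw [t1, t2, Matrix.trace_zero, add_zero, Matrix.trace_mul_cycle, hV, Matrix.one_mul,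
    Matrix.trace_diagonal]

lemma minner_sub {m n : ℕ} (G A B : Matrix (Fin m) (Fin n) ℝ) :
    minner G (A - B) = minner G A - minner G B := by
  simp [minner, Matrix.sub_apply, mul_sub, Finset.sum_sub_distrib]

lemma op_bound {m n r : ℕ} (U : Matrix (Fin m) (Fin r) ℝ) (V : Matrix (Fin n) (Fin r) ℝ)
    (W : Matrix (Fin m) (Fin n) ℝ)
    (hU : Uᵀ * U = 1) (hV : Vᵀ * V = 1)
    (hUW : Uᵀ * W = 0) (hWV : W * V = 0) (hW : specNorm W ≤ 1) :
    ∀ v : Fin n → ℝ, v ⬝ᵥ (((U * Vᵀ + W)ᵀ * (U * Vᵀ + W)) *ᵥ v) ≤ v ⬝ᵥ v := by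
  have hWpsd := posSemidef_tmul W
  have hWH : (Wᵀ * W).IsHermitian := hWpsd.1
  have heig : ∀ i, hWH.eigenvalues i ≤ 1 := by
    intro i
    have h0 : 0 ≤ hWH.eigenvalues i := hWpsd.eigenvalues_nonneg i
    have hs : singVals W i ≤ specNorm W :=
      le_ciSup (Set.Finite.bddAbove (Set.finite_range _)) i
    have h1 : Real.sqrt (hWH.eigenvalues i) ≤ 1 := le_trans hs hW
    nlinarith [Real.sq_sqrt h0, Real.sqrt_nonneg (hWH.eigenvalues i)]
  have hWU : Wᵀ * U = 0 := by
    have := congrArg Matrix.transpose hUW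
    simpa [Matrix.transpose_mul] using this
  have hGtG : (U * Vᵀ + W)ᵀ * (U * Vᵀ + W) = V * Vᵀ + Wᵀ * W := by
    rw [Matrix.transpose_add, Matrix.transpose_mul, Matrix.transpose_transpose, Matrix.add_mul,
      Matrix.mul_add, Matrix.mul_add]
    have t1 : V * Uᵀ * (U * Vᵀ) = V * Vᵀ := by
      rw [Matrix.mul_assoc V, ← Matrix.mul_assoc Uᵀ, hU, Matrix.one_mul]
    have t2 : V * Uᵀ * W = 0 := by rw [Matrix.mul_assoc, hUW, Matrix.mul_zero]
    have t3 : Wᵀ * (U * Vᵀ) = 0 := by rw [← Matrix.mul_assoc, hWU, Matrix.zero_mul]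
    rw [t1, t2, t3, add_zero, zero_add]
  intro v
  rw [hGtG]
  set q : Fin r → ℝ := Vᵀ *ᵥ v with hq
  set p : Fin n → ℝ := V *ᵥ q with hp
  set w : Fin n → ℝ := v - p with hw
  have e1 : (V * Vᵀ) *ᵥ v = p := by rw [hp, hq, Matrix.mulVec_mulVec]
  have e2 : v ⬝ᵥ p = q ⬝ᵥ q := by rw [hp, ← dot_transpose, ← hq]
  have e3 : W *ᵥ p = 0 := by rw [hp, Matrix.mulVec_mulVec, hWV, Matrix.zero_mulVec]
  have e4 : W *ᵥ v = W *ᵥ w := by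
    have hv : v = w + p := by rw [hw]; abel
    conv_lhs => rw [hv]
    rw [Matrix.mulVec_add, e3, add_zero]
  have e5 : p ⬝ᵥ p = q ⬝ᵥ q := by
    have hVp : Vᵀ *ᵥ p = q := by rw [hp, Matrix.mulVec_mulVec, hV, Matrix.one_mulVec]
    conv_lhs => rw [hp]
    rw [← dot_transpose, hVp]
  have term2 : v ⬝ᵥ ((Wᵀ * W) *ᵥ v) = w ⬝ᵥ ((Wᵀ * W) *ᵥ w) := by
    rw [← Matrix.mulVec_mulVec, ← Matrix.mulVec_mulVec, dot_transpose', dot_transpose', e4]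
  have hray : w ⬝ᵥ ((Wᵀ * W) *ᵥ w) ≤ 1 * (w ⬝ᵥ w) := rayleigh_le (Wᵀ * W) hWH 1 heig w
  have e6 : w ⬝ᵥ w = v ⬝ᵥ v - q ⬝ᵥ q := by
    rw [hw, sub_dotProduct, dotProduct_sub, dotProduct_sub,
      dotProduct_comm p v, e2, e5]
    ring
  have hsplit : v ⬝ᵥ ((V * Vᵀ + Wᵀ * W) *ᵥ v) =
      v ⬝ᵥ p + v ⬝ᵥ ((Wᵀ * W) *ᵥ v) := by
    rw [Matrix.add_mulVec, dotProduct_add, e1]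
  rw [hsplit, e2, term2]
  linarith

end NNSub
end

/-- `UVᵀ + W` with `UᵀW = 0`, `WV = 0`, `‖W‖₂ ≤ 1` is a
subgradient of the nuclear norm at `Z = U D Vᵀ`. -/
theorem nuclear_norm_subgradient {m n r : ℕ}
    (Z : Matrix (Fin m) (Fin n) ℝ) (U : Matrix (Fin m) (Fin r) ℝ)
    (d : Fin r → ℝ) (V : Matrix (Fin n) (Fin r) ℝ)
    (hSVD : IsSVD Z U d V)
    (W : Matrix (Fin m) (Fin n) ℝ)
    (hUW : Uᵀ * W = 0) (hWV : W * V = 0) (hW : specNorm W ≤ 1) :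
    ∀ Y : Matrix (Fin m) (Fin n) ℝ,
      nnorm Z + minner (U * Vᵀ + W) (Y - Z) ≤ nnorm Y := by
  intro Y
  obtain ⟨hU, hV, hd, hZ⟩ := hSVD
  have h1 : nnorm Z = ∑ i, d i := NNSub.nnorm_svd Z U d V hU hV hd hZ
  have h2 : minner (U * Vᵀ + W) Z = ∑ i, d i := by
    rw [hZ]; exact NNSub.minner_G_svd U d V W hU hV hUW
  have h3 : minner (U * Vᵀ + W) (Y - Z)
      = minner (U * Vᵀ + W) Y - minner (U * Vᵀ + W) Z := NNSub.minner_sub _ _ _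
  have h4 : minner (U * Vᵀ + W) Y ≤ nnorm Y :=
    NNSub.minner_le_nnorm _ _ (NNSub.op_bound U V W hU hV hUW hWV hW)
  rw [h1, h3, h2]
  linarith
end
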